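/- arXiv:1606.08397 — 3 statements merged into one kernel-verified Lean document; each statement's English description precedes it below -/
import Mathlib

section
/- (Thirring system in hyperbolic coordinates.) Let (u,v) be a C¹ solution of the Thirring system on the cone {(t,x) : t > |x|}, and define U(ρ,y) = (ρ e^{−y})^{1/2} u(ρ cosh y, ρ sinh y), V(ρ,y) = (ρ e^{y})^{1/2} v(ρ cosh y, ρ sinh y). Then for all ρ > 0 and y ∈ ℝ: ∂_ρ U + ρ^{−1} ∂_y U = i V + i ρ^{−1} |V|² U and ∂_ρ V − ρ^{−1} ∂_y V = i U + i ρ^{−1} |U|² V. -/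
noncomputable section

/-- Partial derivative in the first variable. -/
def pt (u : ℝ → ℝ → ℂ) : ℝ → ℝ → ℂ := fun t x => deriv (fun s => u s x) t
/-- Partial derivative in the second variable. -/
def px (u : ℝ → ℝ → ℂ) : ℝ → ℝ → ℂ := fun t x => deriv (fun y => u t y) x

/-- the Thirring system in hyperbolic coordinates.  If (u,v) is a C¹
solution of the Thirring system on the cone {t > |x|}, and
U(ρ,y) = (ρ e^{-y})^{1/2} u(ρ cosh y, ρ sinh y), V(ρ,y) = (ρ e^{y})^{1/2} v(ρ cosh y, ρ sinh y),
then ∂_ρ U + ρ⁻¹ ∂_y U = iV + iρ⁻¹|V|²U and ∂_ρ V - ρ⁻¹ ∂_y V = iU + iρ⁻¹|U|²V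
for all ρ > 0, y ∈ ℝ. -/
theorem thirring_hyperbolic_coordinates (u v U V : ℝ → ℝ → ℂ)
    (hu : ContDiffOn ℝ 1 (fun p : ℝ × ℝ => u p.1 p.2) {p : ℝ × ℝ | |p.2| < p.1})
    (hv : ContDiffOn ℝ 1 (fun p : ℝ × ℝ => v p.1 p.2) {p : ℝ × ℝ | |p.2| < p.1})
    (hsys : ∀ t x : ℝ, |x| < t →
      (pt u t x + px u t x = Complex.I * v t x + Complex.I * (‖v t x‖ ^ 2 : ℝ) * u t x) ∧
      (pt v t x - px v t x = Complex.I * u t x + Complex.I * (‖u t x‖ ^ 2 : ℝ) * v t x))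
    (hU : ∀ ρ y : ℝ, U ρ y =
      ((Real.sqrt (ρ * Real.exp (-y)) : ℝ) : ℂ) * u (ρ * Real.cosh y) (ρ * Real.sinh y))
    (hV : ∀ ρ y : ℝ, V ρ y =
      ((Real.sqrt (ρ * Real.exp y) : ℝ) : ℂ) * v (ρ * Real.cosh y) (ρ * Real.sinh y)) :
    ∀ ρ y : ℝ, 0 < ρ →
      (pt U ρ y + ((ρ⁻¹ : ℝ) : ℂ) * px U ρ y =
        Complex.I * V ρ y + Complex.I * ((ρ⁻¹ : ℝ) : ℂ) * (‖V ρ y‖ ^ 2 : ℝ) * U ρ y) ∧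
      (pt V ρ y - ((ρ⁻¹ : ℝ) : ℂ) * px V ρ y =
        Complex.I * U ρ y + Complex.I * ((ρ⁻¹ : ℝ) : ℂ) * (‖U ρ y‖ ^ 2 : ℝ) * V ρ y) := by
  intro ρ y hρ
  have hopen : IsOpen {p : ℝ × ℝ | |p.2| < p.1} :=
    isOpen_lt (continuous_snd.abs) continuous_fst
  set t : ℝ := ρ * Real.cosh y with ht
  set x : ℝ := ρ * Real.sinh y with hx
  have hcoshpos := Real.cosh_pos y
  have hmem : |x| < t := by
    rw [hx, ht, abs_mul, abs_of_pos hρ]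
    have h1 : |Real.sinh y| < Real.cosh y := by
      nlinarith [Real.cosh_sq y, sq_abs (Real.sinh y), abs_nonneg (Real.sinh y)]
    exact (mul_lt_mul_iff_right₀ hρ).2 h1
  have hnhds : {p : ℝ × ℝ | |p.2| < p.1} ∈ nhds ((t, x) : ℝ × ℝ) :=
    hopen.mem_nhds hmem
  have hdu : DifferentiableAt ℝ (fun p : ℝ × ℝ => u p.1 p.2) (t, x) :=
    ((hu.contDiffAt hnhds).differentiableAt one_ne_zero)
  have hdv : DifferentiableAt ℝ (fun p : ℝ × ℝ => v p.1 p.2) (t, x) :=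
    ((hv.contDiffAt hnhds).differentiableAt one_ne_zero)
  set Lu := fderiv ℝ (fun p : ℝ × ℝ => u p.1 p.2) (t, x) with hLudef
  set Lv := fderiv ℝ (fun p : ℝ × ℝ => v p.1 p.2) (t, x) with hLvdef
  have hLu : HasFDerivAt (fun p : ℝ × ℝ => u p.1 p.2) Lu (t, x) := hdu.hasFDerivAt
  have hLv : HasFDerivAt (fun p : ℝ × ℝ => v p.1 p.2) Lv (t, x) := hdv.hasFDerivAt
  -- partial derivatives of u, v in terms of Lu, Lv
  have hct : HasDerivAt (fun s : ℝ => ((s, x) : ℝ × ℝ)) ((1 : ℝ), (0 : ℝ)) t :=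
    (hasDerivAt_id t).prodMk (hasDerivAt_const t x)
  have hcx : HasDerivAt (fun z : ℝ => ((t, z) : ℝ × ℝ)) ((0 : ℝ), (1 : ℝ)) x :=
    (hasDerivAt_const x t).prodMk (hasDerivAt_id x)
  have hptu : pt u t x = Lu (1, 0) := by
    have h := hLu.comp_hasDerivAt (x := t) hct
    simp only [Function.comp_def] at h
    exact h.deriv
  have hpxu : px u t x = Lu (0, 1) := by
    have h := hLu.comp_hasDerivAt (x := x) hcx
    simp only [Function.comp_def] at h
    exact h.deriv
  have hptv : pt v t x = Lv (1, 0) := by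
    have h := hLv.comp_hasDerivAt (x := t) hct
    simp only [Function.comp_def] at h
    exact h.deriv
  have hpxv : px v t x = Lv (0, 1) := by
    have h := hLv.comp_hasDerivAt (x := x) hcx
    simp only [Function.comp_def] at h
    exact h.deriv
  -- radial and angular curves
  have hcρ : HasDerivAt (fun s : ℝ => ((s * Real.cosh y, s * Real.sinh y) : ℝ × ℝ))
      ((Real.cosh y, Real.sinh y)) ρ :=
    (hasDerivAt_mul_const _).prodMk (hasDerivAt_mul_const _)
  have hcy : HasDerivAt (fun z : ℝ => ((ρ * Real.cosh z, ρ * Real.sinh z) : ℝ × ℝ))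
      ((ρ * Real.sinh y, ρ * Real.cosh y)) y :=
    ((Real.hasDerivAt_cosh y).const_mul ρ).prodMk ((Real.hasDerivAt_sinh y).const_mul ρ)
  have huρ : HasDerivAt (fun s : ℝ => u (s * Real.cosh y) (s * Real.sinh y))
      (Lu (Real.cosh y, Real.sinh y)) ρ := by
    have h := hLu.comp_hasDerivAt (x := ρ) hcρ
    simp only [Function.comp_def] at h
    exact h
  have huy : HasDerivAt (fun z : ℝ => u (ρ * Real.cosh z) (ρ * Real.sinh z))
      (Lu (ρ * Real.sinh y, ρ * Real.cosh y)) y := by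
    have h := hLu.comp_hasDerivAt (x := y) hcy
    simp only [Function.comp_def] at h
    exact h
  have hvρ : HasDerivAt (fun s : ℝ => v (s * Real.cosh y) (s * Real.sinh y))
      (Lv (Real.cosh y, Real.sinh y)) ρ := by
    have h := hLv.comp_hasDerivAt (x := ρ) hcρ
    simp only [Function.comp_def] at h
    exact h
  have hvy : HasDerivAt (fun z : ℝ => v (ρ * Real.cosh z) (ρ * Real.sinh z))
      (Lv (ρ * Real.sinh y, ρ * Real.cosh y)) y := by
    have h := hLv.comp_hasDerivAt (x := y) hcy
    simp only [Function.comp_def] at h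
    exact h
  -- linearity
  have hlin : ∀ (L : ℝ × ℝ →L[ℝ] ℂ) (a b : ℝ),
      L (a, b) = (a : ℂ) * L (1, 0) + (b : ℂ) * L (0, 1) := by
    intro L a b
    have h : ((a, b) : ℝ × ℝ) = a • ((1 : ℝ), (0 : ℝ)) + b • ((0 : ℝ), (1 : ℝ)) := by
      simp [Prod.ext_iff]
    rw [h, map_add, map_smul, map_smul]
    simp [Complex.real_smul]
  -- square-root factors
  set sm : ℝ := Real.sqrt (ρ * Real.exp (-y)) with hsmdef
  set sp : ℝ := Real.sqrt (ρ * Real.exp y) with hspdef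
  have hmpos : 0 < ρ * Real.exp (-y) := mul_pos hρ (Real.exp_pos _)
  have hppos : 0 < ρ * Real.exp y := mul_pos hρ (Real.exp_pos _)
  have hsm_pos : 0 < sm := Real.sqrt_pos.2 hmpos
  have hsp_pos : 0 < sp := Real.sqrt_pos.2 hppos
  have hsm2 : sm ^ 2 = ρ * Real.exp (-y) := Real.sq_sqrt hmpos.le
  have hsp2 : sp ^ 2 = ρ * Real.exp y := Real.sq_sqrt hppos.le
  have hspsm : sp = sm * Real.exp y := by
    have key : ρ * Real.exp y = (ρ * Real.exp (-y)) * (Real.exp y) ^ 2 := by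
      rw [Real.exp_neg]; field_simp
    rw [hspdef, key, Real.sqrt_mul hmpos.le, Real.sqrt_sq (Real.exp_pos y).le]
  -- derivatives of the square-root factors
  have hsmρ : HasDerivAt (fun s : ℝ => ((Real.sqrt (s * Real.exp (-y)) : ℝ) : ℂ))
      ((Real.exp (-y) / (2 * sm) : ℝ) : ℂ) ρ := by
    have h1 : HasDerivAt (fun s : ℝ => s * Real.exp (-y)) (Real.exp (-y)) ρ :=
      hasDerivAt_mul_const _
    have h2 := (Real.hasDerivAt_sqrt hmpos.ne').comp ρ h1
    have h3 := h2.ofReal_comp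
    simp only [Function.comp_def] at h3
    convert h3 using 2
    rw [hsmdef]; ring
  have hspρ : HasDerivAt (fun s : ℝ => ((Real.sqrt (s * Real.exp y) : ℝ) : ℂ))
      ((Real.exp y / (2 * sp) : ℝ) : ℂ) ρ := by
    have h1 : HasDerivAt (fun s : ℝ => s * Real.exp y) (Real.exp y) ρ :=
      hasDerivAt_mul_const _
    have h2 := (Real.hasDerivAt_sqrt hppos.ne').comp ρ h1
    have h3 := h2.ofReal_comp
    simp only [Function.comp_def] at h3
    convert h3 using 2
    rw [hspdef]; ring
  have hsmy : HasDerivAt (fun z : ℝ => ((Real.sqrt (ρ * Real.exp (-z)) : ℝ) : ℂ))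
      ((-(ρ * Real.exp (-y)) / (2 * sm) : ℝ) : ℂ) y := by
    have h0 : HasDerivAt (fun z : ℝ => Real.exp (-z)) (-Real.exp (-y)) y := by
      have := (Real.hasDerivAt_exp (-y)).comp y (hasDerivAt_neg (x := y))
      simpa [Function.comp_def] using this
    have h1 : HasDerivAt (fun z : ℝ => ρ * Real.exp (-z)) (ρ * -Real.exp (-y)) y :=
      h0.const_mul ρ
    have h2 := (Real.hasDerivAt_sqrt hmpos.ne').comp y h1
    have h3 := h2.ofReal_comp
    simp only [Function.comp_def] at h3
    convert h3 using 2
    rw [hsmdef]; ring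
  have hspy : HasDerivAt (fun z : ℝ => ((Real.sqrt (ρ * Real.exp z) : ℝ) : ℂ))
      ((ρ * Real.exp y / (2 * sp) : ℝ) : ℂ) y := by
    have h1 : HasDerivAt (fun z : ℝ => ρ * Real.exp z) (ρ * Real.exp y) y :=
      (Real.hasDerivAt_exp y).const_mul ρ
    have h2 := (Real.hasDerivAt_sqrt hppos.ne').comp y h1
    have h3 := h2.ofReal_comp
    simp only [Function.comp_def] at h3
    convert h3 using 2
    rw [hspdef]; ring
  -- partial derivatives of U, V
  have hptU : pt U ρ y = ((Real.exp (-y) / (2 * sm) : ℝ) : ℂ) * u t x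
      + (sm : ℂ) * Lu (Real.cosh y, Real.sinh y) := by
    have hfun : (fun s : ℝ => U s y)
        = fun s : ℝ => ((Real.sqrt (s * Real.exp (-y)) : ℝ) : ℂ)
            * u (s * Real.cosh y) (s * Real.sinh y) := funext fun s => hU s y
    show deriv (fun s : ℝ => U s y) ρ = _
    rw [hfun]
    exact (hsmρ.mul huρ).deriv
  have hpxU : px U ρ y = ((-(ρ * Real.exp (-y)) / (2 * sm) : ℝ) : ℂ) * u t x
      + (sm : ℂ) * Lu (ρ * Real.sinh y, ρ * Real.cosh y) := by
    have hfun : (fun z : ℝ => U ρ z)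
        = fun z : ℝ => ((Real.sqrt (ρ * Real.exp (-z)) : ℝ) : ℂ)
            * u (ρ * Real.cosh z) (ρ * Real.sinh z) := funext fun z => hU ρ z
    show deriv (fun z : ℝ => U ρ z) y = _
    rw [hfun]
    exact (hsmy.mul huy).deriv
  have hptV : pt V ρ y = ((Real.exp y / (2 * sp) : ℝ) : ℂ) * v t x
      + (sp : ℂ) * Lv (Real.cosh y, Real.sinh y) := by
    have hfun : (fun s : ℝ => V s y)
        = fun s : ℝ => ((Real.sqrt (s * Real.exp y) : ℝ) : ℂ)
            * v (s * Real.cosh y) (s * Real.sinh y) := funext fun s => hV s y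
    show deriv (fun s : ℝ => V s y) ρ = _
    rw [hfun]
    exact (hspρ.mul hvρ).deriv
  have hpxV : px V ρ y = ((ρ * Real.exp y / (2 * sp) : ℝ) : ℂ) * v t x
      + (sp : ℂ) * Lv (ρ * Real.sinh y, ρ * Real.cosh y) := by
    have hfun : (fun z : ℝ => V ρ z)
        = fun z : ℝ => ((Real.sqrt (ρ * Real.exp z) : ℝ) : ℂ)
            * v (ρ * Real.cosh z) (ρ * Real.sinh z) := funext fun z => hV ρ z
    show deriv (fun z : ℝ => V ρ z) y = _
    rw [hfun]
    exact (hspy.mul hvy).deriv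
  -- the system at (t,x)
  obtain ⟨heq1, heq2⟩ := hsys t x hmem
  rw [hptu, hpxu] at heq1
  rw [hptv, hpxv] at heq2
  -- norms
  have hnV : (‖V ρ y‖ ^ 2 : ℝ) = (ρ * Real.exp y) * ‖v t x‖ ^ 2 := by
    rw [hV ρ y, norm_mul, mul_pow, Complex.norm_real, Real.norm_eq_abs,
      abs_of_nonneg (Real.sqrt_nonneg _), Real.sq_sqrt hppos.le]
  have hnU : (‖U ρ y‖ ^ 2 : ℝ) = (ρ * Real.exp (-y)) * ‖u t x‖ ^ 2 := by
    rw [hU ρ y, norm_mul, mul_pow, Complex.norm_real, Real.norm_eq_abs,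
      abs_of_nonneg (Real.sqrt_nonneg _), Real.sq_sqrt hmpos.le]
  have hρne : (ρ : ℂ) ≠ 0 := by exact_mod_cast hρ.ne'
  have hcw : (ρ : ℂ)⁻¹ * (ρ : ℂ) = 1 := inv_mul_cancel₀ hρne
  -- abbreviations
  have hUval : U ρ y = (sm : ℂ) * u t x := hU ρ y
  have hVval : V ρ y = (sp : ℂ) * v t x := hV ρ y
  have hchsh : Real.cosh y + Real.sinh y = Real.exp y := Real.cosh_add_sinh y
  constructor
  · rw [hptU, hpxU, hlin Lu (Real.cosh y) (Real.sinh y),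
      hlin Lu (ρ * Real.sinh y) (ρ * Real.cosh y), hnV, hUval, hVval]
    have hey : Complex.cosh (y : ℂ) + Complex.sinh (y : ℂ) = Complex.exp (y : ℂ) := by
      exact_mod_cast congrArg (Complex.ofReal) hchsh
    have hsp' : (sp : ℂ) = (sm : ℂ) * Complex.exp (y : ℂ) := by
      rw [← Complex.ofReal_exp]; exact_mod_cast hspsm
    push_cast
    push_cast at heq1
    rw [hsp']
    linear_combination ((sm : ℂ) * (Complex.cosh (y : ℂ) + Complex.sinh (y : ℂ))) * heq1
      + (Complex.I * (sm:ℂ) * v t x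
          + Complex.I * (sm:ℂ) * ((‖v t x‖ : ℂ) ^ 2) * u t x) * hey
      + ((sm:ℂ) * Complex.sinh (y : ℂ) * Lu (1,0) + (sm:ℂ) * Complex.cosh (y : ℂ) * Lu (0,1)
          - Complex.exp (-(y : ℂ)) / (2 * (sm:ℂ)) * u t x
          - Complex.I * Complex.exp (y : ℂ) * ((‖v t x‖ : ℂ) ^ 2) * (sm:ℂ) * u t x) * hcw
  · rw [hptV, hpxV, hlin Lv (Real.cosh y) (Real.sinh y),
      hlin Lv (ρ * Real.sinh y) (ρ * Real.cosh y), hnU, hUval, hVval]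
    have hcmsh : Real.cosh y - Real.sinh y = Real.exp (-y) := Real.cosh_sub_sinh y
    have hem : Complex.cosh (y : ℂ) - Complex.sinh (y : ℂ) = Complex.exp (-(y : ℂ)) := by
      exact_mod_cast congrArg (Complex.ofReal) hcmsh
    have hsm' : (sm : ℂ) = (sp : ℂ) * Complex.exp (-(y : ℂ)) := by
      have h : sm = sp * Real.exp (-y) := by
        rw [hspsm, Real.exp_neg]
        field_simp
      rw [show (-(y : ℂ)) = ((-y : ℝ) : ℂ) by push_cast; ring, ← Complex.ofReal_exp]
      exact_mod_cast h
    push_cast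
    push_cast at heq2
    rw [hsm']
    linear_combination ((sp : ℂ) * (Complex.cosh (y : ℂ) - Complex.sinh (y : ℂ))) * heq2
      + (Complex.I * (sp:ℂ) * u t x
          + Complex.I * (sp:ℂ) * ((‖u t x‖ : ℂ) ^ 2) * v t x) * hem
      + (-((sp:ℂ) * Complex.sinh (y : ℂ) * Lv (1,0)) - (sp:ℂ) * Complex.cosh (y : ℂ) * Lv (0,1)
          - Complex.exp (y : ℂ) / (2 * (sp:ℂ)) * v t x
          - Complex.I * Complex.exp (-(y : ℂ)) * ((‖u t x‖ : ℂ) ^ 2) * (sp:ℂ) * v t x) * hcw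
end
end

section
/- (Existence of the asymptotic modulus.) Let λ ∈ ℝ, C₀ > 0 and let φ, S, R : [1,∞) → ℂ with φ, S of class C¹, satisfying ∂_ρ φ = (iλ/ρ)|φ|² φ + ∂_ρ S + R on [1,∞), together with the bounds |φ(ρ)| ≤ C₀, |S(ρ)| ≤ C₀ ρ^{−1/2}, |R(ρ)| ≤ C₀ ρ^{−3/2} for all ρ ≥ 1. Then there exist a ≥ 0 and a constant C₁ (depending only on λ and C₀) such that | |φ(ρ)|² − a | ≤ C₁ ρ^{−1/2} for all ρ ≥ 1; in particular |φ(ρ)|² → a as ρ → ∞. -/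
noncomputable section

open Filter Set Complex

/-- existence of the asymptotic modulus.  If
∂_ρ φ = (iλ/ρ)|φ|²φ + ∂_ρ S + R on [1,∞) with |φ| ≤ C₀, |S| ≤ C₀ ρ^{-1/2},
|R| ≤ C₀ ρ^{-3/2}, then there is a ≥ 0 with ||φ(ρ)|² - a| ≤ C₁ ρ^{-1/2};
in particular |φ(ρ)|² → a as ρ → ∞. -/
theorem asymptotic_modulus_exists (lam C₀ : ℝ) (hC₀ : 0 < C₀) :
    ∃ C₁ : ℝ, ∀ φ S R : ℝ → ℂ,
      ContDiffOn ℝ 1 φ (Set.Ici 1) → ContDiffOn ℝ 1 S (Set.Ici 1) →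
      (∀ ρ : ℝ, 1 ≤ ρ →
        derivWithin φ (Set.Ici 1) ρ =
          (Complex.I * (lam : ℂ) / (ρ : ℂ)) * ((‖φ ρ‖ ^ 2 : ℝ) : ℂ) * φ ρ +
            derivWithin S (Set.Ici 1) ρ + R ρ) →
      (∀ ρ : ℝ, 1 ≤ ρ → ‖φ ρ‖ ≤ C₀) →
      (∀ ρ : ℝ, 1 ≤ ρ → ‖S ρ‖ ≤ C₀ * ρ ^ (-(1 : ℝ) / 2)) →
      (∀ ρ : ℝ, 1 ≤ ρ → ‖R ρ‖ ≤ C₀ * ρ ^ (-(3 : ℝ) / 2)) →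
      ∃ a : ℝ, 0 ≤ a ∧
        (∀ ρ : ℝ, 1 ≤ ρ → |‖φ ρ‖ ^ 2 - a| ≤ C₁ * ρ ^ (-(1 : ℝ) / 2)) ∧
        Filter.Tendsto (fun ρ => ‖φ ρ‖ ^ 2) Filter.atTop (nhds a) := by
  set K : ℝ := 2 * (|lam| * C₀ ^ 4 + 2 * C₀ ^ 2) with hKdef
  have hKpos : 0 < K := by positivity
  refine ⟨2 * K + 3 * C₀ ^ 2, ?_⟩
  intro φ S R hφ hS hode hφb hSb hRb
  set ψ : ℝ → ℂ := fun ρ => φ ρ - S ρ with hψdef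
  set h : ℝ → ℝ := fun ρ => ‖ψ ρ‖ ^ 2 with hhdef
  set ψ' : ℝ → ℂ := fun ρ => derivWithin φ (Set.Ici 1) ρ - derivWithin S (Set.Ici 1) ρ with hψ'def
  set D : ℝ → ℝ := fun ρ => 2 * ((starRingEnd ℂ) (ψ ρ) * ψ' ρ).re with hDdef
  -- basic derivative facts
  have hψd : ∀ ρ ∈ Set.Ici (1:ℝ), HasDerivWithinAt ψ (ψ' ρ) (Set.Ici 1) ρ := by
    intro ρ hρ
    exact ((hφ.differentiableOn one_ne_zero ρ hρ).hasDerivWithinAt).sub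
      ((hS.differentiableOn one_ne_zero ρ hρ).hasDerivWithinAt)
  have hhd : ∀ ρ ∈ Set.Ici (1:ℝ), HasDerivWithinAt h (D ρ) (Set.Ici 1) ρ := by
    intro ρ hρ
    have h2 := (hψd ρ hρ).norm_sq
    have he : D ρ = 2 * (inner ℝ (ψ ρ) (ψ' ρ) : ℝ) := by
      simp [hDdef, RCLike.inner_apply, RCLike.re_to_complex]
      ring
    rw [he]; exact h2
  -- the ODE for ψ
  have hψ'eq : ∀ ρ : ℝ, 1 ≤ ρ →
      ψ' ρ = (Complex.I * (lam : ℂ) / (ρ : ℂ)) * ((‖φ ρ‖ ^ 2 : ℝ) : ℂ) * φ ρ + R ρ := by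
    intro ρ hρ
    simp only [hψ'def, hode ρ hρ]
    ring
  -- rpow facts
  have hq_eq : ∀ ρ : ℝ, 1 ≤ ρ → ρ ^ (-(3:ℝ)/2) = ρ ^ (-(1:ℝ)/2) * ρ⁻¹ := by
    intro ρ hρ
    have hρ0 : (0:ℝ) < ρ := lt_of_lt_of_le one_pos hρ
    rw [← Real.rpow_neg_one ρ, ← Real.rpow_add hρ0]
    norm_num
  have hp_le_one : ∀ ρ : ℝ, 1 ≤ ρ → ρ ^ (-(1:ℝ)/2) ≤ 1 := by
    intro ρ hρ
    exact Real.rpow_le_one_of_one_le_of_nonpos hρ (by norm_num)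
  have hp_pos : ∀ ρ : ℝ, 1 ≤ ρ → 0 < ρ ^ (-(1:ℝ)/2) := by
    intro ρ hρ
    exact Real.rpow_pos_of_pos (lt_of_lt_of_le one_pos hρ) _
  have hq_pos : ∀ ρ : ℝ, 1 ≤ ρ → 0 < ρ ^ (-(3:ℝ)/2) := by
    intro ρ hρ
    exact Real.rpow_pos_of_pos (lt_of_lt_of_le one_pos hρ) _
  -- bound on D
  have hD : ∀ ρ : ℝ, 1 ≤ ρ → |D ρ| ≤ K * ρ ^ (-(3:ℝ)/2) := by
    intro ρ hρ
    have hρ0 : (0:ℝ) < ρ := lt_of_lt_of_le one_pos hρ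
    set T : ℂ := (Complex.I * (lam : ℂ) / (ρ : ℂ)) * ((‖φ ρ‖ ^ 2 : ℝ) : ℂ) * φ ρ with hT
    have hsplit : (starRingEnd ℂ) (ψ ρ) * ψ' ρ =
        (starRingEnd ℂ) (φ ρ) * T + (- ((starRingEnd ℂ) (S ρ)) * T + (starRingEnd ℂ) (ψ ρ) * R ρ) := by
      rw [hψ'eq ρ hρ]
      simp only [hψdef, map_sub]
      ring
    have hre0 : ((starRingEnd ℂ) (φ ρ) * T).re = 0 := by
      have heq : (starRingEnd ℂ) (φ ρ) * T =
          Complex.I * ((lam : ℂ) / (ρ : ℂ) * ((‖φ ρ‖ ^ 2 : ℝ) : ℂ)) *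
            ((starRingEnd ℂ) (φ ρ) * φ ρ) := by
        rw [hT]; ring
      rw [heq, ← Complex.normSq_eq_conj_mul_self]
      have hr : (lam : ℂ) / (ρ : ℂ) * ((‖φ ρ‖ ^ 2 : ℝ) : ℂ) = ((lam / ρ * ‖φ ρ‖ ^ 2 : ℝ) : ℂ) := by
        push_cast; ring
      rw [hr, mul_assoc, ← Complex.ofReal_mul]
      simp only [Complex.mul_re, Complex.I_re, Complex.I_im, Complex.ofReal_re,
        Complex.ofReal_im, zero_mul, one_mul, zero_sub, neg_eq_zero]
    -- bound on T
    have hTb : ‖T‖ ≤ |lam| * C₀ ^ 3 * ρ⁻¹ := by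
      have h1 : ‖T‖ = |lam| / ρ * ‖φ ρ‖ ^ 2 * ‖φ ρ‖ := by
        rw [hT]
        simp [norm_mul, norm_div, Complex.norm_real, Real.norm_eq_abs, abs_of_pos hρ0,
          _root_.abs_of_nonneg (sq_nonneg ‖φ ρ‖)]
      rw [h1]
      have hb := hφb ρ hρ
      have h0 : (0:ℝ) ≤ ‖φ ρ‖ := norm_nonneg _
      calc |lam| / ρ * ‖φ ρ‖ ^ 2 * ‖φ ρ‖ ≤ |lam| / ρ * C₀ ^ 2 * C₀ := by
            apply mul_le_mul _ hb h0 (by positivity)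
            apply mul_le_mul_of_nonneg_left _ (by positivity)
            exact pow_le_pow_left₀ h0 hb 2
        _ = |lam| * C₀ ^ 3 * ρ⁻¹ := by field_simp
    have hSbρ := hSb ρ hρ
    have hRbρ := hRb ρ hρ
    have hψb : ‖ψ ρ‖ ≤ 2 * C₀ := by
      calc ‖ψ ρ‖ ≤ ‖φ ρ‖ + ‖S ρ‖ := norm_sub_le _ _
        _ ≤ C₀ + C₀ * ρ ^ (-(1:ℝ)/2) := add_le_add (hφb ρ hρ) hSbρ
        _ ≤ C₀ + C₀ * 1 := by
            have := hp_le_one ρ hρ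
            nlinarith [hC₀.le]
        _ = 2 * C₀ := by ring
    have key : |((starRingEnd ℂ) (ψ ρ) * ψ' ρ).re| ≤
        |lam| * C₀ ^ 4 * ρ ^ (-(3:ℝ)/2) + 2 * C₀ ^ 2 * ρ ^ (-(3:ℝ)/2) := by
      rw [hsplit]
      have e1 : |(- ((starRingEnd ℂ) (S ρ)) * T).re| ≤ ‖S ρ‖ * ‖T‖ := by
        calc |(- ((starRingEnd ℂ) (S ρ)) * T).re| ≤ ‖- ((starRingEnd ℂ) (S ρ)) * T‖ :=
              Complex.abs_re_le_norm _
          _ = ‖S ρ‖ * ‖T‖ := by rw [norm_mul, norm_neg, RCLike.norm_conj]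
      have e2 : |((starRingEnd ℂ) (ψ ρ) * R ρ).re| ≤ ‖ψ ρ‖ * ‖R ρ‖ := by
        calc |((starRingEnd ℂ) (ψ ρ) * R ρ).re| ≤ ‖(starRingEnd ℂ) (ψ ρ) * R ρ‖ :=
              Complex.abs_re_le_norm _
          _ = ‖ψ ρ‖ * ‖R ρ‖ := by rw [norm_mul, RCLike.norm_conj]
      have e1' : ‖S ρ‖ * ‖T‖ ≤ |lam| * C₀ ^ 4 * ρ ^ (-(3:ℝ)/2) := by
        calc ‖S ρ‖ * ‖T‖ ≤ (C₀ * ρ ^ (-(1:ℝ)/2)) * (|lam| * C₀ ^ 3 * ρ⁻¹) :=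
              mul_le_mul hSbρ hTb (norm_nonneg _) (by positivity)
          _ = |lam| * C₀ ^ 4 * (ρ ^ (-(1:ℝ)/2) * ρ⁻¹) := by ring
          _ = |lam| * C₀ ^ 4 * ρ ^ (-(3:ℝ)/2) := by rw [← hq_eq ρ hρ]
      have e2' : ‖ψ ρ‖ * ‖R ρ‖ ≤ 2 * C₀ ^ 2 * ρ ^ (-(3:ℝ)/2) := by
        calc ‖ψ ρ‖ * ‖R ρ‖ ≤ (2 * C₀) * (C₀ * ρ ^ (-(3:ℝ)/2)) :=
              mul_le_mul hψb hRbρ (norm_nonneg _) (by positivity)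
          _ = 2 * C₀ ^ 2 * ρ ^ (-(3:ℝ)/2) := by ring
      calc |((starRingEnd ℂ) (φ ρ) * T + (- ((starRingEnd ℂ) (S ρ)) * T + (starRingEnd ℂ) (ψ ρ) * R ρ)).re|
          = |(- ((starRingEnd ℂ) (S ρ)) * T).re + ((starRingEnd ℂ) (ψ ρ) * R ρ).re| := by
            rw [Complex.add_re, hre0, zero_add, Complex.add_re]
        _ ≤ |(- ((starRingEnd ℂ) (S ρ)) * T).re| + |((starRingEnd ℂ) (ψ ρ) * R ρ).re| := abs_add_le _ _
        _ ≤ ‖S ρ‖ * ‖T‖ + ‖ψ ρ‖ * ‖R ρ‖ := add_le_add e1 e2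
        _ ≤ |lam| * C₀ ^ 4 * ρ ^ (-(3:ℝ)/2) + 2 * C₀ ^ 2 * ρ ^ (-(3:ℝ)/2) := add_le_add e1' e2'
    calc |D ρ| = 2 * |((starRingEnd ℂ) (ψ ρ) * ψ' ρ).re| := by
          rw [hDdef]; rw [abs_mul, abs_of_pos (by norm_num : (0:ℝ) < 2)]
      _ ≤ 2 * (|lam| * C₀ ^ 4 * ρ ^ (-(3:ℝ)/2) + 2 * C₀ ^ 2 * ρ ^ (-(3:ℝ)/2)) := by linarith [key]
      _ = K * ρ ^ (-(3:ℝ)/2) := by rw [hKdef]; ring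
  -- auxiliary monotone comparison functions
  have hcont_h : ContinuousOn h (Set.Ici 1) := fun ρ hρ => (hhd ρ hρ).continuousWithinAt
  have hrd : ∀ ρ : ℝ, 1 ≤ ρ →
      HasDerivAt (fun y : ℝ => 2 * K * y ^ (-(1:ℝ)/2)) (-(K * ρ ^ (-(3:ℝ)/2))) ρ := by
    intro ρ hρ
    have hρ0 : (0:ℝ) < ρ := lt_of_lt_of_le one_pos hρ
    have h1 := (Real.hasDerivAt_rpow_const (x := ρ) (p := -(1:ℝ)/2) (Or.inl hρ0.ne')).const_mul
      (2 * K)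
    refine h1.congr_deriv ?_
    rw [show (-(1:ℝ)/2 - 1) = -(3:ℝ)/2 by norm_num]
    ring
  have hcont_r : ContinuousOn (fun y : ℝ => 2 * K * y ^ (-(1:ℝ)/2)) (Set.Ici 1) :=
    fun ρ hρ => ((hrd ρ hρ).continuousAt).continuousWithinAt
  have hint : interior (Set.Ici (1:ℝ)) = Set.Ioi 1 := interior_Ici
  have hu_anti : AntitoneOn (fun ρ => h ρ + 2 * K * ρ ^ (-(1:ℝ)/2)) (Set.Ici 1) := by
    apply antitoneOn_of_hasDerivWithinAt_nonpos (convex_Ici 1) (hcont_h.add hcont_r)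
      (f' := fun ρ => D ρ - K * ρ ^ (-(3:ℝ)/2))
    · intro y hy
      rw [hint] at hy ⊢
      have hy1 : (1:ℝ) ≤ y := le_of_lt hy
      have hder := ((hhd y hy1).add ((hrd y hy1).hasDerivWithinAt)).mono
        (Set.Ioi_subset_Ici_self)
      exact hder.congr_deriv (by ring)
    · intro y hy
      rw [hint] at hy
      have hDb := abs_le.mp (hD y (le_of_lt hy))
      linarith [hDb.2]
  have hv_mono : MonotoneOn (fun ρ => h ρ - 2 * K * ρ ^ (-(1:ℝ)/2)) (Set.Ici 1) := by
    apply monotoneOn_of_hasDerivWithinAt_nonneg (convex_Ici 1) (hcont_h.sub hcont_r)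
      (f' := fun ρ => D ρ + K * ρ ^ (-(3:ℝ)/2))
    · intro y hy
      rw [hint] at hy ⊢
      have hy1 : (1:ℝ) ≤ y := le_of_lt hy
      have hder := ((hhd y hy1).sub ((hrd y hy1).hasDerivWithinAt)).mono
        (Set.Ioi_subset_Ici_self)
      exact hder.congr_deriv (by ring)
    · intro y hy
      rw [hint] at hy
      have hDb := abs_le.mp (hD y (le_of_lt hy))
      linarith [hDb.1]
  -- two-point estimate
  have key : ∀ s t : ℝ, 1 ≤ s → s ≤ t → |h t - h s| ≤ 2 * K * s ^ (-(1:ℝ)/2) := by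
    intro s t hs hst
    have ht : (1:ℝ) ≤ t := le_trans hs hst
    have hu := hu_anti (Set.mem_Ici.mpr hs) (Set.mem_Ici.mpr ht) hst
    have hv := hv_mono (Set.mem_Ici.mpr hs) (Set.mem_Ici.mpr ht) hst
    simp only [] at hu hv
    have hpt : 0 < t ^ (-(1:ℝ)/2) := hp_pos t ht
    rw [abs_le]
    constructor <;> nlinarith [hKpos]
  -- the Cauchy sequence h (n+1)
  have hn1 : ∀ n : ℕ, (1:ℝ) ≤ (n:ℝ) + 1 := fun n => by
    have := Nat.cast_nonneg (α := ℝ) n; linarith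
  have hcauchy : CauchySeq (fun n : ℕ => h ((n:ℝ) + 1)) := by
    apply cauchySeq_of_le_tendsto_0 (fun N : ℕ => 2 * K * ((N:ℝ) + 1) ^ (-(1:ℝ)/2))
    · intro n m N hn hm
      have hmono : ∀ n m : ℕ, m ≤ n → N ≤ m →
          dist (h ((n:ℝ)+1)) (h ((m:ℝ)+1)) ≤ 2 * K * ((N:ℝ) + 1) ^ (-(1:ℝ)/2) := by
        intro n m hmn hNm
        rw [Real.dist_eq]
        have h1 : ((m:ℝ) + 1) ≤ (n:ℝ) + 1 := by
          have : (m:ℝ) ≤ (n:ℝ) := Nat.cast_le.mpr hmn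
          linarith
        have h2 := key ((m:ℝ)+1) ((n:ℝ)+1) (hn1 m) h1
        have h3 : ((m:ℝ)+1) ^ (-(1:ℝ)/2) ≤ ((N:ℝ)+1) ^ (-(1:ℝ)/2) := by
          apply Real.rpow_le_rpow_of_nonpos (by positivity)
          · have : (N:ℝ) ≤ (m:ℝ) := Nat.cast_le.mpr hNm
            linarith
          · norm_num
        calc |h ((n:ℝ)+1) - h ((m:ℝ)+1)| ≤ 2 * K * ((m:ℝ)+1) ^ (-(1:ℝ)/2) := h2
          _ ≤ 2 * K * ((N:ℝ)+1) ^ (-(1:ℝ)/2) := by nlinarith [hKpos]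
      rcases le_total m n with hmn | hnm
      · exact hmono n m hmn hm
      · rw [dist_comm]; exact hmono m n hnm hn
    · have h2 : Filter.Tendsto (fun y : ℝ => y ^ (-(1:ℝ)/2)) Filter.atTop (nhds 0) := by
        rw [show (-(1:ℝ)/2) = -(1/2 : ℝ) by norm_num]
        exact tendsto_rpow_neg_atTop (by norm_num)
      have h1 : Filter.Tendsto (fun N : ℕ => ((N:ℝ) + 1)) Filter.atTop Filter.atTop :=
        Filter.tendsto_atTop_add_const_right _ 1 tendsto_natCast_atTop_atTop
      have := (h2.comp h1).const_mul (2 * K)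
      simpa using this
  obtain ⟨a, ha⟩ := cauchySeq_tendsto_of_complete hcauchy
  have ha0 : 0 ≤ a := ge_of_tendsto' ha (fun n => by
    show (0:ℝ) ≤ ‖ψ ((n:ℝ) + 1)‖ ^ 2; positivity)
  -- the bound on |h ρ - a|
  have hbound : ∀ ρ : ℝ, 1 ≤ ρ → |h ρ - a| ≤ 2 * K * ρ ^ (-(1:ℝ)/2) := by
    intro ρ hρ
    have hlim : Filter.Tendsto (fun n : ℕ => |h ρ - h ((n:ℝ)+1)|) Filter.atTop
        (nhds |h ρ - a|) := (tendsto_const_nhds.sub ha).abs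
    refine le_of_tendsto hlim ?_
    filter_upwards [Filter.eventually_ge_atTop ⌈ρ⌉₊] with n hn
    have hρn : ρ ≤ (n:ℝ) + 1 := by
      have h1 := Nat.le_ceil ρ
      have h2 : ((⌈ρ⌉₊ : ℕ) : ℝ) ≤ (n : ℝ) := Nat.cast_le.mpr hn
      linarith
    have := key ρ ((n:ℝ)+1) hρ hρn
    rwa [abs_sub_comm] at this
  -- relation between ‖φ‖² and h
  have hφh : ∀ ρ : ℝ, 1 ≤ ρ → |‖φ ρ‖ ^ 2 - h ρ| ≤ 3 * C₀ ^ 2 * ρ ^ (-(1:ℝ)/2) := by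
    intro ρ hρ
    have hexp : h ρ = ‖φ ρ‖ ^ 2 + ‖S ρ‖ ^ 2 - 2 * ((φ ρ) * (starRingEnd ℂ) (S ρ)).re := by
      have := RCLike.normSq_sub (φ ρ) (S ρ)
      simpa [RCLike.normSq_eq_def', hhdef, RCLike.re_to_complex] using this
    have e1 : |((φ ρ) * (starRingEnd ℂ) (S ρ)).re| ≤ ‖φ ρ‖ * ‖S ρ‖ := by
      calc |((φ ρ) * (starRingEnd ℂ) (S ρ)).re| ≤ ‖(φ ρ) * (starRingEnd ℂ) (S ρ)‖ :=
            Complex.abs_re_le_norm _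
        _ = ‖φ ρ‖ * ‖S ρ‖ := by rw [norm_mul, RCLike.norm_conj]
    have hp1 := hp_le_one ρ hρ
    have hpp := hp_pos ρ hρ
    have hSρ := hSb ρ hρ
    have hφρ := hφb ρ hρ
    have hS0 : (0:ℝ) ≤ ‖S ρ‖ := norm_nonneg _
    have hφ0 : (0:ℝ) ≤ ‖φ ρ‖ := norm_nonneg _
    have e1' := abs_le.mp e1
    rw [hexp, abs_le]
    constructor <;> nlinarith [sq_nonneg (‖S ρ‖), hC₀.le]
  refine ⟨a, ha0, ?_, ?_⟩
  · intro ρ hρ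
    calc |‖φ ρ‖ ^ 2 - a| ≤ |‖φ ρ‖ ^ 2 - h ρ| + |h ρ - a| := abs_sub_le _ _ _
      _ ≤ 3 * C₀ ^ 2 * ρ ^ (-(1:ℝ)/2) + 2 * K * ρ ^ (-(1:ℝ)/2) :=
          add_le_add (hφh ρ hρ) (hbound ρ hρ)
      _ = (2 * K + 3 * C₀ ^ 2) * ρ ^ (-(1:ℝ)/2) := by ring
  · rw [tendsto_iff_dist_tendsto_zero]
    have hg : Filter.Tendsto (fun ρ : ℝ => (2 * K + 3 * C₀ ^ 2) * ρ ^ (-(1:ℝ)/2))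
        Filter.atTop (nhds 0) := by
      have h2 : Filter.Tendsto (fun y : ℝ => y ^ (-(1:ℝ)/2)) Filter.atTop (nhds 0) := by
        rw [show (-(1:ℝ)/2) = -(1/2 : ℝ) by norm_num]
        exact tendsto_rpow_neg_atTop (by norm_num)
      simpa using h2.const_mul (2 * K + 3 * C₀ ^ 2)
    apply squeeze_zero' (Filter.Eventually.of_forall (fun ρ => dist_nonneg)) _ hg
    filter_upwards [Filter.eventually_ge_atTop (1:ℝ)] with ρ hρ
    rw [Real.dist_eq]
    calc |‖φ ρ‖ ^ 2 - a| ≤ |‖φ ρ‖ ^ 2 - h ρ| + |h ρ - a| := abs_sub_le _ _ _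
      _ ≤ 3 * C₀ ^ 2 * ρ ^ (-(1:ℝ)/2) + 2 * K * ρ ^ (-(1:ℝ)/2) :=
          add_le_add (hφh ρ hρ) (hbound ρ hρ)
      _ = (2 * K + 3 * C₀ ^ 2) * ρ ^ (-(1:ℝ)/2) := by ring
end
end

section
/- (Modified scattering ODE lemma.) Let λ ∈ ℝ, C₀ > 0, a ≥ 0, and let φ, S, R : [1,∞) → ℂ with φ, S of class C¹, satisfying ∂_ρ φ = (iλ/ρ)|φ|² φ + ∂_ρ S + R on [1,∞) together with the bounds |φ(ρ)| ≤ C₀, |S(ρ)| ≤ C₀ ρ^{−1/2}, |R(ρ)| ≤ C₀ ρ^{−3/2}, and | |φ(ρ)|² − a | ≤ C₀ ρ^{−1/2} for all ρ ≥ 1. Then the limit σ := lim_{ρ→∞} e^{−iλ a ln ρ} φ(ρ) exists in ℂ, satisfies |σ|² = a, and there is a constant C₁ (depending only on λ, a and C₀) such that | φ(ρ) − e^{iλ a ln ρ} σ | ≤ C₁ ρ^{−1/2} for all ρ ≥ 1. -/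
noncomputable section

/-- modified scattering ODE lemma.  If
∂_ρ φ = (iλ/ρ)|φ|²φ + ∂_ρ S + R on [1,∞) with |φ| ≤ C₀, |S| ≤ C₀ ρ^{-1/2},
|R| ≤ C₀ ρ^{-3/2}, and ||φ(ρ)|² - a| ≤ C₀ ρ^{-1/2}, then
σ = lim_{ρ→∞} e^{-iλa ln ρ} φ(ρ) exists, |σ|² = a, and
|φ(ρ) - e^{iλa ln ρ} σ| ≤ C₁ ρ^{-1/2}. -/
theorem modified_scattering_ode (lam C₀ a : ℝ) (hC₀ : 0 < C₀) (ha : 0 ≤ a) :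
    ∃ C₁ : ℝ, ∀ φ S R : ℝ → ℂ,
      ContDiffOn ℝ 1 φ (Set.Ici 1) → ContDiffOn ℝ 1 S (Set.Ici 1) →
      (∀ ρ : ℝ, 1 ≤ ρ →
        derivWithin φ (Set.Ici 1) ρ =
          (Complex.I * (lam : ℂ) / (ρ : ℂ)) * ((‖φ ρ‖ ^ 2 : ℝ) : ℂ) * φ ρ +
            derivWithin S (Set.Ici 1) ρ + R ρ) →
      (∀ ρ : ℝ, 1 ≤ ρ → ‖φ ρ‖ ≤ C₀) →
      (∀ ρ : ℝ, 1 ≤ ρ → ‖S ρ‖ ≤ C₀ * ρ ^ (-(1 : ℝ) / 2)) →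
      (∀ ρ : ℝ, 1 ≤ ρ → ‖R ρ‖ ≤ C₀ * ρ ^ (-(3 : ℝ) / 2)) →
      (∀ ρ : ℝ, 1 ≤ ρ → |‖φ ρ‖ ^ 2 - a| ≤ C₀ * ρ ^ (-(1 : ℝ) / 2)) →
      ∃ σ : ℂ,
        Filter.Tendsto
          (fun ρ : ℝ => Complex.exp (-Complex.I * (lam : ℂ) * (a : ℂ) * (Real.log ρ : ℂ)) * φ ρ)
          Filter.atTop (nhds σ) ∧
        ‖σ‖ ^ 2 = a ∧
        ∀ ρ : ℝ, 1 ≤ ρ →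
          ‖φ ρ - Complex.exp (Complex.I * (lam : ℂ) * (a : ℂ) * (Real.log ρ : ℂ)) * σ‖ ≤
            C₁ * ρ ^ (-(1 : ℝ) / 2) := by
  classical
  set K : ℝ := |lam| * C₀ * C₀ + |lam| * a * C₀ + C₀ with hKdef
  have hK0 : 0 < K := by positivity
  refine ⟨2 * K + C₀, ?_⟩
  intro φ S R hφ hS hODE hφb hSb hRb hab
  set g : ℝ → ℂ := fun t => Complex.exp (-Complex.I * lam * a * (Real.log t : ℂ)) with hgdef
  have hg1 : ∀ t : ℝ, ‖g t‖ = 1 := by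
    intro t; simp [hgdef, Complex.norm_exp]
  set F : ℝ → ℂ := fun t => g t * (φ t - S t) with hFdef
  set E : ℝ → ℂ := fun t =>
    g t * ((Complex.I * lam / t) * (((‖φ t‖ ^ 2 : ℝ) : ℂ) - (a : ℂ)) * φ t
      + (Complex.I * lam * a / t) * S t + R t) with hEdef
  -- derivative of g
  have hgd : ∀ ρ : ℝ, 1 ≤ ρ →
      HasDerivAt g ((-Complex.I * lam * a / ρ) * g ρ) ρ := by
    intro ρ hρ
    have h0 : (0:ℝ) < ρ := lt_of_lt_of_le one_pos hρ
    have hlog : HasDerivAt (fun t : ℝ => ((Real.log t : ℝ) : ℂ)) ((ρ⁻¹ : ℝ) : ℂ) ρ :=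
      (Real.hasDerivAt_log h0.ne').ofReal_comp
    have h := (hlog.const_mul (-Complex.I * lam * a)).cexp
    convert h using 1
    simp only [hgdef]
    push_cast
    rw [div_eq_mul_inv]
    ring
  -- derivative of F
  have hFd : ∀ ρ : ℝ, 1 ≤ ρ → HasDerivWithinAt F (E ρ) (Set.Ici 1) ρ := by
    intro ρ hρ
    have h0 : (0:ℝ) < ρ := lt_of_lt_of_le one_pos hρ
    have hρc : (ρ:ℂ) ≠ 0 := by exact_mod_cast h0.ne'
    have h1 := ((hφ.differentiableOn one_ne_zero) ρ hρ).hasDerivWithinAt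
    have h2 := ((hS.differentiableOn one_ne_zero) ρ hρ).hasDerivWithinAt
    have h3 := ((hgd ρ hρ).hasDerivWithinAt).mul (h1.sub h2)
    refine h3.congr_deriv ?_
    symm
    rw [hODE ρ hρ]
    simp only [hEdef, hgdef, Pi.sub_apply]
    push_cast
    field_simp
    ring
  -- bound on E
  have h32 : ∀ ρ : ℝ, 1 ≤ ρ → ρ⁻¹ * ρ ^ (-(1:ℝ)/2) = ρ ^ (-(3:ℝ)/2) := by
    intro ρ hρ
    have h0 : (0:ℝ) < ρ := lt_of_lt_of_le one_pos hρ
    rw [show (-(3:ℝ)/2) = (-1) + (-(1:ℝ)/2) by norm_num, Real.rpow_add h0, Real.rpow_neg_one]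
  have hEb : ∀ ρ : ℝ, 1 ≤ ρ → ‖E ρ‖ ≤ K * ρ ^ (-(3:ℝ)/2) := by
    intro ρ hρ
    have h0 : (0:ℝ) < ρ := lt_of_lt_of_le one_pos hρ
    have hr2 : (0:ℝ) ≤ ρ ^ (-(1:ℝ)/2) := Real.rpow_nonneg h0.le _
    have habs : ‖(Complex.I * (lam:ℂ) / (ρ:ℂ))‖ = |lam| / ρ := by
      simp [norm_div, Complex.norm_real, abs_of_pos h0]
    have habs2 : ‖(Complex.I * (lam:ℂ) * (a:ℂ) / (ρ:ℂ))‖ = |lam| * a / ρ := by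
      simp [norm_div, Complex.norm_real, abs_of_pos h0, abs_of_nonneg ha]
    have hterm1 : ‖(Complex.I * lam / ρ) * (((‖φ ρ‖ ^ 2 : ℝ) : ℂ) - (a : ℂ)) * φ ρ‖
        ≤ |lam| * C₀ * C₀ * ρ ^ (-(3:ℝ)/2) := by
      rw [norm_mul, norm_mul, habs]
      have hmid : ‖(((‖φ ρ‖ ^ 2 : ℝ) : ℂ) - (a : ℂ))‖ = |‖φ ρ‖ ^ 2 - a| := by
        rw [show (((‖φ ρ‖ ^ 2 : ℝ) : ℂ) - (a : ℂ)) = (((‖φ ρ‖ ^ 2 - a : ℝ)) : ℂ) by push_cast; ring,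
          Complex.norm_real, Real.norm_eq_abs]
      rw [hmid]
      calc |lam| / ρ * |‖φ ρ‖ ^ 2 - a| * ‖φ ρ‖
          ≤ |lam| / ρ * (C₀ * ρ ^ (-(1:ℝ)/2)) * C₀ := by
            gcongr
            · exact hab ρ hρ
            · exact hφb ρ hρ
        _ = |lam| * C₀ * C₀ * (ρ⁻¹ * ρ ^ (-(1:ℝ)/2)) := by ring
        _ = |lam| * C₀ * C₀ * ρ ^ (-(3:ℝ)/2) := by rw [h32 ρ hρ]
    have hterm2 : ‖(Complex.I * lam * a / ρ) * S ρ‖ ≤ |lam| * a * C₀ * ρ ^ (-(3:ℝ)/2) := by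
      rw [norm_mul, habs2]
      calc |lam| * a / ρ * ‖S ρ‖ ≤ |lam| * a / ρ * (C₀ * ρ ^ (-(1:ℝ)/2)) := by
            gcongr
            exact hSb ρ hρ
        _ = |lam| * a * C₀ * (ρ⁻¹ * ρ ^ (-(1:ℝ)/2)) := by ring
        _ = |lam| * a * C₀ * ρ ^ (-(3:ℝ)/2) := by rw [h32 ρ hρ]
    calc ‖E ρ‖ = ‖(Complex.I * lam / ρ) * (((‖φ ρ‖ ^ 2 : ℝ) : ℂ) - (a : ℂ)) * φ ρ
          + (Complex.I * lam * a / ρ) * S ρ + R ρ‖ := by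
          rw [hEdef]; simp only [norm_mul, hg1, one_mul]
      _ ≤ ‖(Complex.I * lam / ρ) * (((‖φ ρ‖ ^ 2 : ℝ) : ℂ) - (a : ℂ)) * φ ρ
            + (Complex.I * lam * a / ρ) * S ρ‖ + ‖R ρ‖ := norm_add_le _ _
      _ ≤ (‖(Complex.I * lam / ρ) * (((‖φ ρ‖ ^ 2 : ℝ) : ℂ) - (a : ℂ)) * φ ρ‖
            + ‖(Complex.I * lam * a / ρ) * S ρ‖) + ‖R ρ‖ := by
          gcongr; exact norm_add_le _ _
      _ ≤ (|lam| * C₀ * C₀ * ρ ^ (-(3:ℝ)/2) + |lam| * a * C₀ * ρ ^ (-(3:ℝ)/2))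
            + C₀ * ρ ^ (-(3:ℝ)/2) := by
          gcongr
          exact hRb ρ hρ
      _ = K * ρ ^ (-(3:ℝ)/2) := by rw [hKdef]; ring
  -- continuity of F on Ici 1
  have hFc : ContinuousOn F (Set.Ici 1) := fun x hx =>
    ((hFd x hx).differentiableWithinAt).continuousWithinAt
  -- mean value estimate
  have hmvt : ∀ r s : ℝ, 1 ≤ r → r ≤ s →
      ‖F s - F r‖ ≤ 2 * K * r ^ (-(1:ℝ)/2) - 2 * K * s ^ (-(1:ℝ)/2) := by
    intro r s hr hrs
    have key := image_norm_le_of_norm_deriv_right_le_deriv_boundary'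
      (f := fun t => F t - F r) (f' := E) (a := r) (b := s)
      (B := fun t => 2 * K * r ^ (-(1:ℝ)/2) - 2 * K * t ^ (-(1:ℝ)/2))
      (B' := fun t => K * t ^ (-(3:ℝ)/2))
      ?_ ?_ ?_ ?_ ?_ ?_
    · exact key (Set.right_mem_Icc.2 hrs)
    · exact (hFc.mono fun x hx => Set.mem_Ici.2 (le_trans hr hx.1)).sub continuousOn_const
    · intro x hx
      have hx1 : (1:ℝ) ≤ x := le_trans hr hx.1
      exact (((hFd x hx1).mono (Set.Ici_subset_Ici.2 hx1)).sub_const _)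
    · simp
    · have hcont : ContinuousOn (fun t : ℝ => t ^ (-(1:ℝ)/2)) (Set.Icc r s) := by
        intro t ht
        have ht0 : t ≠ 0 := (lt_of_lt_of_le one_pos (le_trans hr ht.1)).ne'
        exact (Real.continuousAt_rpow_const t _ (Or.inl ht0)).continuousWithinAt
      exact continuousOn_const.sub (continuousOn_const.mul hcont)
    · intro x hx
      have hx0 : x ≠ 0 := (lt_of_lt_of_le one_pos (le_trans hr hx.1)).ne'
      have h := ((Real.hasDerivAt_rpow_const (x := x) (p := -(1:ℝ)/2) (Or.inl hx0)).const_mul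
        (2 * K)).const_sub (2 * K * r ^ (-(1:ℝ)/2))
      have heq : 2 * K * r ^ (-(1:ℝ)/2) - 2 * K * r ^ (-(1:ℝ)/2) = 0 := by ring
      refine h.hasDerivWithinAt.congr_deriv ?_
      rw [show (-(1:ℝ)/2 - 1) = -(3:ℝ)/2 by norm_num]
      ring
    · intro x hx
      exact hEb x (le_trans hr hx.1)
  -- Cauchy sequence and limit
  set u : ℕ → ℂ := fun n => F ((n : ℝ) + 1) with hudef
  have hcs : CauchySeq u := by
    apply cauchySeq_of_le_tendsto_0 (b := fun N : ℕ => 2 * K * ((N : ℝ) + 1) ^ (-(1:ℝ)/2))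
    · intro n m N hn hm
      have key : ∀ p q : ℕ, N ≤ p → p ≤ q → dist (u q) (u p) ≤
          2 * K * ((N : ℝ) + 1) ^ (-(1:ℝ)/2) := by
        intro p q hp hpq
        have h1 : (1:ℝ) ≤ (p:ℝ) + 1 := by
          have := Nat.cast_nonneg (α := ℝ) p; linarith
        have h2 : ((p:ℝ)+1) ≤ ((q:ℝ)+1) := by
          have : (p:ℝ) ≤ (q:ℝ) := by exact_mod_cast hpq
          linarith
        have hb := hmvt ((p:ℝ)+1) ((q:ℝ)+1) h1 h2
        rw [dist_eq_norm]
        have hN : ((N:ℝ)+1) ≤ ((p:ℝ)+1) := by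
          have : (N:ℝ) ≤ (p:ℝ) := by exact_mod_cast hp
          linarith
        have hNpos : (0:ℝ) < (N:ℝ)+1 := by positivity
        have hmono : ((p:ℝ)+1) ^ (-(1:ℝ)/2) ≤ ((N:ℝ)+1) ^ (-(1:ℝ)/2) :=
          Real.rpow_le_rpow_of_nonpos hNpos hN (by norm_num)
        have hq0 : (0:ℝ) ≤ 2 * K * ((q:ℝ)+1) ^ (-(1:ℝ)/2) := by positivity
        calc ‖u q - u p‖ ≤ 2 * K * ((p:ℝ)+1) ^ (-(1:ℝ)/2) - 2 * K * ((q:ℝ)+1) ^ (-(1:ℝ)/2) := hb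
          _ ≤ 2 * K * ((p:ℝ)+1) ^ (-(1:ℝ)/2) := by linarith
          _ ≤ 2 * K * ((N:ℝ)+1) ^ (-(1:ℝ)/2) := by gcongr
      rcases le_total n m with h | h
      · rw [dist_comm]; exact key n m hn h
      · exact key m n hm h
    · have h1 : Filter.Tendsto (fun N : ℕ => ((N:ℝ) + 1)) Filter.atTop Filter.atTop :=
        Filter.tendsto_atTop_add_const_right _ 1 tendsto_natCast_atTop_atTop
      have h2 : Filter.Tendsto (fun N : ℕ => ((N:ℝ) + 1) ^ (-(1:ℝ)/2)) Filter.atTop (nhds 0) := by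
        have := (tendsto_rpow_neg_atTop (y := (1:ℝ)/2) (by norm_num)).comp h1
        simpa [neg_div, Function.comp_def] using this
      have := h2.const_mul (2 * K)
      simpa using this
  obtain ⟨σ, hσ⟩ := cauchySeq_tendsto_of_complete hcs
  -- quantitative bound on F - σ
  have hFσ : ∀ ρ : ℝ, 1 ≤ ρ → ‖F ρ - σ‖ ≤ 2 * K * ρ ^ (-(1:ℝ)/2) := by
    intro ρ hρ
    have htend : Filter.Tendsto (fun n : ℕ => ‖F ρ - u n‖) Filter.atTop
        (nhds ‖F ρ - σ‖) := (tendsto_const_nhds.sub hσ).norm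
    refine le_of_tendsto htend ?_
    filter_upwards [Filter.eventually_ge_atTop ⌈ρ⌉₊] with n hn
    have hρn : ρ ≤ (n:ℝ) + 1 := le_trans (Nat.le_ceil ρ) (by
      have : (⌈ρ⌉₊:ℝ) ≤ (n:ℝ) := by exact_mod_cast hn
      linarith)
    have hb := hmvt ρ ((n:ℝ)+1) hρ hρn
    have hq0 : (0:ℝ) ≤ 2 * K * ((n:ℝ)+1) ^ (-(1:ℝ)/2) := by positivity
    calc ‖F ρ - u n‖ = ‖u n - F ρ‖ := by rw [norm_sub_rev]
      _ ≤ 2 * K * ρ ^ (-(1:ℝ)/2) - 2 * K * ((n:ℝ)+1) ^ (-(1:ℝ)/2) := hb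
      _ ≤ 2 * K * ρ ^ (-(1:ℝ)/2) := by linarith
  -- bound on g φ - σ
  have hgφ : ∀ ρ : ℝ, 1 ≤ ρ → ‖g ρ * φ ρ - σ‖ ≤ (2 * K + C₀) * ρ ^ (-(1:ℝ)/2) := by
    intro ρ hρ
    have hsplit : g ρ * φ ρ - σ = (F ρ - σ) + g ρ * S ρ := by rw [hFdef]; ring
    calc ‖g ρ * φ ρ - σ‖ = ‖(F ρ - σ) + g ρ * S ρ‖ := by rw [hsplit]
      _ ≤ ‖F ρ - σ‖ + ‖g ρ * S ρ‖ := norm_add_le _ _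
      _ ≤ 2 * K * ρ ^ (-(1:ℝ)/2) + C₀ * ρ ^ (-(1:ℝ)/2) := by
          refine add_le_add (hFσ ρ hρ) ?_
          rw [norm_mul, hg1, one_mul]; exact hSb ρ hρ
      _ = (2 * K + C₀) * ρ ^ (-(1:ℝ)/2) := by ring
  refine ⟨σ, ?_, ?_, ?_⟩
  · -- tendsto
    have hA : Filter.Tendsto (fun ρ : ℝ => g ρ * φ ρ) Filter.atTop (nhds σ) := by
      rw [tendsto_iff_norm_sub_tendsto_zero]
      apply squeeze_zero_norm' (a := fun ρ : ℝ => (2 * K + C₀) * ρ ^ (-(1:ℝ)/2))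
      · filter_upwards [Filter.eventually_ge_atTop (1:ℝ)] with ρ hρ
        simpa using hgφ ρ hρ
      · have := (tendsto_rpow_neg_atTop (y := (1:ℝ)/2) (by norm_num)).const_mul (2 * K + C₀)
        simpa [neg_div] using this
    exact hA
  · -- |σ|² = a
    have hA : Filter.Tendsto (fun ρ : ℝ => g ρ * φ ρ) Filter.atTop (nhds σ) := by
      rw [tendsto_iff_norm_sub_tendsto_zero]
      apply squeeze_zero_norm' (a := fun ρ : ℝ => (2 * K + C₀) * ρ ^ (-(1:ℝ)/2))
      · filter_upwards [Filter.eventually_ge_atTop (1:ℝ)] with ρ hρ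
        simpa using hgφ ρ hρ
      · have := (tendsto_rpow_neg_atTop (y := (1:ℝ)/2) (by norm_num)).const_mul (2 * K + C₀)
        simpa [neg_div] using this
    have h1 : Filter.Tendsto (fun ρ : ℝ => ‖g ρ * φ ρ‖ ^ 2) Filter.atTop (nhds (‖σ‖ ^ 2)) :=
      (hA.norm).pow 2
    have h2 : (fun ρ : ℝ => ‖g ρ * φ ρ‖ ^ 2) = fun ρ : ℝ => ‖φ ρ‖ ^ 2 := by
      funext ρ; rw [norm_mul, hg1, one_mul]
    rw [h2] at h1
    have h3 : Filter.Tendsto (fun ρ : ℝ => ‖φ ρ‖ ^ 2) Filter.atTop (nhds a) := by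
      rw [tendsto_iff_dist_tendsto_zero]
      apply squeeze_zero' (g := fun ρ : ℝ => C₀ * ρ ^ (-(1:ℝ)/2))
      · filter_upwards with ρ; exact dist_nonneg
      · filter_upwards [Filter.eventually_ge_atTop (1:ℝ)] with ρ hρ
        rw [Real.dist_eq]
        exact hab ρ hρ
      · have := (tendsto_rpow_neg_atTop (y := (1:ℝ)/2) (by norm_num)).const_mul C₀
        simpa [neg_div] using this
    exact tendsto_nhds_unique h1 h3
  · -- quantitative bound
    intro ρ hρ
    have hinv : g ρ * Complex.exp (Complex.I * lam * a * (Real.log ρ : ℂ)) = 1 := by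
      rw [hgdef]
      rw [← Complex.exp_add]
      norm_num
    have key : φ ρ - Complex.exp (Complex.I * lam * a * (Real.log ρ : ℂ)) * σ
        = Complex.exp (Complex.I * lam * a * (Real.log ρ : ℂ)) * (g ρ * φ ρ - σ) := by
      have : Complex.exp (Complex.I * lam * a * (Real.log ρ : ℂ)) * (g ρ * φ ρ)
          = φ ρ := by
        rw [show Complex.exp (Complex.I * lam * a * (Real.log ρ : ℂ)) * (g ρ * φ ρ)
          = (g ρ * Complex.exp (Complex.I * lam * a * (Real.log ρ : ℂ))) * φ ρ by ring, hinv,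
          one_mul]
      rw [mul_sub, this]
    rw [key, norm_mul]
    have hexp1 : ‖Complex.exp (Complex.I * lam * a * (Real.log ρ : ℂ))‖ = 1 := by
      simp [Complex.norm_exp]
    rw [hexp1, one_mul]
    exact hgφ ρ hρ
end
end
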